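/- Let P > 0 and σ̃² > 0 be real numbers and let h̃ ∈ ℂ. Then for every h ∈ ℂ and every ν > 0, ln(1 + |h|²P/ν) + (σ̃² + |h̃|²P)/(ν + |h|²P) − (σ̃² + |h̃ − h|²P)/ν ≤ ln(1 + |h̃|²P/σ̃²), and equality holds when h = h̃ and ν = σ̃². -/

import Mathlib

/-- Proposition 1: the GMI expression for the AWGN auxiliary model is maximized
by `h = h̃`, `ν = σ̃²`, with maximal value `log (1 + |h̃|² P / σ̃²)`. -/
theorem stmt0 (P σt : ℝ) (hP : 0 < P) (hσ : 0 < σt) (ht : ℂ) :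
    (∀ (h : ℂ) (ν : ℝ), 0 < ν →
      Real.log (1 + ‖h‖ ^ 2 * P / ν)
        + (σt + ‖ht‖ ^ 2 * P) / (ν + ‖h‖ ^ 2 * P)
        - (σt + ‖ht - h‖ ^ 2 * P) / ν
      ≤ Real.log (1 + ‖ht‖ ^ 2 * P / σt)) ∧
    (Real.log (1 + ‖ht‖ ^ 2 * P / σt)
        + (σt + ‖ht‖ ^ 2 * P) / (σt + ‖ht‖ ^ 2 * P)
        - (σt + ‖ht - ht‖ ^ 2 * P) / σt
      = Real.log (1 + ‖ht‖ ^ 2 * P / σt)) := by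
  constructor
  · intro h ν hν
    set a := ‖h‖ with ha
    set b := ‖ht‖ with hb
    set c := ‖ht - h‖ with hc
    have ha0 : 0 ≤ a := norm_nonneg h
    have hb0 : 0 ≤ b := norm_nonneg ht
    have hc0 : 0 ≤ c := norm_nonneg (ht - h)
    have htri : |b - a| ≤ c := abs_norm_sub_norm_le ht h
    have hc2 : (b - a) ^ 2 ≤ c ^ 2 := by
      have := sq_abs (b - a)
      nlinarith [abs_nonneg (b - a)]
    have ha1 : (0:ℝ) < 1 + a ^ 2 * P / ν := by positivity
    have hb1 : (0:ℝ) < 1 + b ^ 2 * P / σt := by positivity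
    have hu : (0:ℝ) < ν + a ^ 2 * P := by positivity
    have hs : (0:ℝ) < σt + b ^ 2 * P := by positivity
    have hlog : Real.log (1 + a ^ 2 * P / ν) - Real.log (1 + b ^ 2 * P / σt)
        ≤ (1 + a ^ 2 * P / ν) / (1 + b ^ 2 * P / σt) - 1 := by
      rw [← Real.log_div ha1.ne' hb1.ne']
      exact Real.log_le_sub_one_of_pos (by positivity)
    have poly : σt * (ν + a ^ 2 * P) ^ 2 + ν * (σt + b ^ 2 * P) ^ 2
        ≤ (ν + σt + c ^ 2 * P) * (σt + b ^ 2 * P) * (ν + a ^ 2 * P) := by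
      nlinarith [sq_nonneg (ν * b - σt * a - a * b * (b - a) * P),
        mul_pos hs hu, hc2, mul_nonneg (mul_nonneg (mul_pos hs hu).le hP.le)
          (sub_nonneg.mpr hc2), sq_nonneg (b - a), hP.le]
    have key : (1 + a ^ 2 * P / ν) / (1 + b ^ 2 * P / σt) - 1
        + (σt + b ^ 2 * P) / (ν + a ^ 2 * P) - (σt + c ^ 2 * P) / ν ≤ 0 := by
      have e : (1 + a ^ 2 * P / ν) / (1 + b ^ 2 * P / σt) - 1
          + (σt + b ^ 2 * P) / (ν + a ^ 2 * P) - (σt + c ^ 2 * P) / ν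
          = (σt * (ν + a ^ 2 * P) ^ 2 + ν * (σt + b ^ 2 * P) ^ 2
              - (ν + σt + c ^ 2 * P) * (σt + b ^ 2 * P) * (ν + a ^ 2 * P))
            / (ν * (σt + b ^ 2 * P) * (ν + a ^ 2 * P)) := by
        field_simp
        ring
      rw [e]
      apply div_nonpos_of_nonpos_of_nonneg
      · linarith
      · positivity
    linarith
  · have h0 : ‖ht - ht‖ = 0 := by simp
    rw [h0]
    have hA : (0:ℝ) < σt + ‖ht‖ ^ 2 * P := by positivity
    rw [div_self hA.ne']
    norm_num
    rw [div_self hσ.ne'] <;> ring
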